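/- Let V be a real vector space and k ≥ 2 a natural number. If ω₁ and ω₂ are linearly independent alternating k-linear forms on V, then there exists a vector v ∈ V such that the contractions ι_v ω₁ and ι_v ω₂ are linearly independent alternating (k−1)-linear forms. -/

import Mathlib

section Aux

variable {V : Type*} [AddCommGroup V] [Module ℝ V]

/-- A nonzero alternating form has a nonzero contraction. -/
lemma aux_curry_zero_all {m : ℕ} (f : V [⋀^Fin (m + 1)]→ₗ[ℝ] ℝ)
    (h : ∀ v : V, f.curryLeft v = 0) : f = 0 := by
  ext x
  have h0 := AlternatingMap.congr_fun (h (x 0)) (Fin.tail x)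
  simpa [Matrix.vecCons, Fin.cons_self_tail] using h0

lemma aux_curry_anticomm {m : ℕ} (f : V [⋀^Fin (m + 2)]→ₗ[ℝ] ℝ) (v w : V) :
    (f.curryLeft v).curryLeft w = -((f.curryLeft w).curryLeft v) := by
  have h : ((f.curryLeft (v + w)).curryLeft (v + w)) = 0 := f.curryLeft_same _
  simp only [map_add, AlternatingMap.curryLeft_add, LinearMap.add_apply,
    AlternatingMap.curryLeft_same, add_zero, zero_add] at h
  exact eq_neg_of_add_eq_zero_right h

lemma aux_curry_sub {m : ℕ} (f g : V [⋀^Fin (m + 1)]→ₗ[ℝ] ℝ) (v : V) :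
    (f - g).curryLeft v = f.curryLeft v - g.curryLeft v := by
  ext x
  simp

lemma aux_curry_smul {m : ℕ} (C : ℝ) (f : V [⋀^Fin (m + 1)]→ₗ[ℝ] ℝ) (v : V) :
    (C • f).curryLeft v = C • f.curryLeft v := by
  ext x
  simp

end Aux

theorem stmt0 (V : Type*) [AddCommGroup V] [Module ℝ V] (n : ℕ) (hn : 2 ≤ n + 1)
    (ω₁ ω₂ : V [⋀^Fin (n + 1)]→ₗ[ℝ] ℝ)
    (h : LinearIndependent ℝ ![ω₁, ω₂]) :
    ∃ v : V, LinearIndependent ℝ ![ω₁.curryLeft v, ω₂.curryLeft v] := by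
  obtain ⟨m, rfl⟩ : ∃ m, n = m + 1 := ⟨n - 1, by omega⟩
  by_contra hcon
  push_neg at hcon
  have hω₁ : ω₁ ≠ 0 := fun h0 => h.ne_zero 0 (by simp [h0])
  -- existence of nonzero contraction
  have exv : ∀ (k : ℕ) (f : V [⋀^Fin (k + 1)]→ₗ[ℝ] ℝ), f ≠ 0 → ∃ v, f.curryLeft v ≠ 0 := by
    intro k f hf
    by_contra hall
    push_neg at hall
    exact hf (aux_curry_zero_all f hall)
  -- for each v with nonzero contraction of ω₁, a proportionality constant
  have dep : ∀ v : V, ∃ c : ℝ, ω₁.curryLeft v ≠ 0 → ω₂.curryLeft v = c • ω₁.curryLeft v := by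
    intro v
    by_cases hv : ω₁.curryLeft v = 0
    · exact ⟨0, fun hv' => absurd hv hv'⟩
    · have hli := hcon v
      rw [LinearIndependent.pair_iff' hv] at hli
      push_neg at hli
      obtain ⟨a, ha⟩ := hli
      exact ⟨a, fun _ => ha.symm⟩
  choose c hc using dep
  -- double contraction forces equality of constants
  have key : ∀ v w : V, ω₁.curryLeft v ≠ 0 → ω₁.curryLeft w ≠ 0 →
      (ω₁.curryLeft v).curryLeft w ≠ 0 → c v = c w := by
    intro v w hv hw hvw
    have h1 : (ω₂.curryLeft v).curryLeft w = c v • (ω₁.curryLeft v).curryLeft w := by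
      rw [hc v hv, aux_curry_smul]
    have h2 : (ω₂.curryLeft w).curryLeft v = c w • (ω₁.curryLeft w).curryLeft v := by
      rw [hc w hw, aux_curry_smul]
    rw [aux_curry_anticomm ω₂ w v, aux_curry_anticomm ω₁ w v, h1, smul_neg, neg_inj] at h2
    have hsub : (c v - c w) • (ω₁.curryLeft v).curryLeft w = 0 := by
      have e := sub_smul (c v) (c w) ((ω₁.curryLeft v).curryLeft w)
      rw [h2, sub_self] at e
      exact e
    rcases smul_eq_zero.mp hsub with h0 | h0
    · exact sub_eq_zero.mp h0
    · exact absurd h0 hvw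
  -- the constant is the same for all v with nonzero contraction
  have const : ∀ v w : V, ω₁.curryLeft v ≠ 0 → ω₁.curryLeft w ≠ 0 → c v = c w := by
    intro v w hv hw
    by_cases hli : LinearIndependent ℝ ![ω₁.curryLeft v, ω₁.curryLeft w]
    · have hu : ω₁.curryLeft (v + w) ≠ 0 := by
        rw [map_add]
        intro h0
        have := (LinearIndependent.pair_iff.mp hli 1 1 (by simpa using h0)).1
        norm_num at this
      have e3 := hc (v + w) hu
      rw [map_add, map_add, hc v hv, hc w hw, smul_add] at e3
      have heq : (c v - c (v + w)) • ω₁.curryLeft v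
          + (c w - c (v + w)) • ω₁.curryLeft w = 0 := by
        linear_combination (norm := module) e3
      obtain ⟨hA, hB⟩ := LinearIndependent.pair_iff.mp hli _ _ heq
      rw [sub_eq_zero] at hA hB
      rw [hA, hB]
    · rw [LinearIndependent.pair_iff' hv] at hli
      push_neg at hli
      obtain ⟨l, hl⟩ := hli
      have hl0 : l ≠ 0 := fun h0 => hw (by rw [← hl, h0, zero_smul])
      obtain ⟨x, hx⟩ := exv _ (ω₁.curryLeft v) hv
      have hxv : ω₁.curryLeft x ≠ 0 := by
        intro h0
        apply hx
        rw [aux_curry_anticomm, h0]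
        simp
      have hwx : (ω₁.curryLeft w).curryLeft x ≠ 0 := by
        rw [← hl, aux_curry_smul]
        exact smul_ne_zero hl0 hx
      exact (key v x hv hxv hx).trans (key w x hw hxv hwx).symm
  obtain ⟨v₀, hv₀⟩ := exv _ ω₁ hω₁
  set C := c v₀ with hC
  have key0 : ∀ u : V, ω₁.curryLeft u ≠ 0 → (ω₂ - C • ω₁).curryLeft u = 0 := by
    intro u hu
    rw [aux_curry_sub, aux_curry_smul, hc u hu, const u v₀ hu hv₀, sub_self]
  have hη : ω₂ - C • ω₁ = 0 := by
    apply aux_curry_zero_all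
    intro v
    by_cases hv : ω₁.curryLeft v = 0
    · have h1 : ω₁.curryLeft (v + v₀) ≠ 0 := by
        rw [map_add, hv, zero_add]; exact hv₀
      have h2 := key0 _ h1
      rw [map_add, key0 v₀ hv₀, add_zero] at h2
      exact h2
    · exact key0 v hv
  have hsp : ω₂ = C • ω₁ := by rwa [sub_eq_zero] at hη
  have := (LinearIndependent.pair_iff.mp h C (-1)
    (by rw [hsp]; module)).2
  norm_num at this
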